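/- arXiv:1105.3686 — 6 statements merged into one kernel-verified Lean document; each statement's English description precedes it below -/
import Mathlib

section
/- Let A and B be m×n complex matrices and suppose rank(A) ≤ r. Then for every index i with r < i ≤ min(m, n), the i-th singular value of B satisfies σ_i(B) ≤ ‖B − A‖_F. -/
open Matrix

/-- `σ` lists the singular values of the complex matrix `M`: the entries of `σ` are
nonnegative, listed in decreasing order, and their squares are the eigenvalues of `Mᴴ M`
(up to a permutation); when `m < n` this automatically pads with zeros. -/
def IsSingularValues {m n : ℕ} (M : Matrix (Fin m) (Fin n) ℂ) (σ : Fin n → ℝ) : Prop :=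
  Antitone σ ∧ (∀ i, 0 ≤ σ i) ∧
    ∃ e : Fin n ≃ Fin n,
      ∀ i, σ i ^ 2 = (Matrix.isHermitian_conjTranspose_mul_self M).eigenvalues (e i)

/-- If `A, B` are `m × n` complex matrices with `rank A ≤ r`, then for every index `i` with
`r < i ≤ min m n` (so, 0-indexed, `r ≤ i < min m n`), the `i`-th singular value of `B`
satisfies `σ_i(B) ≤ ‖B - A‖_F`. -/
theorem stmt_4 (m n r : ℕ) (A B : Matrix (Fin m) (Fin n) ℂ) (hrank : A.rank ≤ r)
    (σB : Fin n → ℝ) (hB : IsSingularValues B σB) :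
    ∀ i : Fin n, r ≤ (i : ℕ) → (i : ℕ) < min m n →
      σB i ≤ Real.sqrt (∑ x, ∑ y, ‖(B - A) x y‖ ^ 2) := by
  classical
  obtain ⟨hanti, hpos, e, heig⟩ := hB
  intro i hri _him
  have hF2 : (0:ℝ) ≤ ∑ x, ∑ y, ‖(B - A) x y‖ ^ 2 :=
    Finset.sum_nonneg fun _ _ => Finset.sum_nonneg fun _ _ => by positivity
  rw [Real.le_sqrt (hpos i) hF2]
  set hH := Matrix.isHermitian_conjTranspose_mul_self B with hHdef
  set lam : Fin n → ℝ := hH.eigenvalues with hlam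
  set b := hH.eigenvectorBasis with hb
  set S : Set (Fin n) := {j | σB i ^ 2 ≤ lam j} with hS
  set V : Submodule ℂ (EuclideanSpace ℂ (Fin n)) :=
    Submodule.span ℂ (Set.range (fun j : S => (b j : EuclideanSpace ℂ (Fin n)))) with hV
  set K : Submodule ℂ (EuclideanSpace ℂ (Fin n)) :=
    (LinearMap.ker A.mulVecLin).comap (WithLp.linearEquiv 2 ℂ (Fin n → ℂ)).toLinearMap with hK
  have horth : ∀ z ∈ V, ∀ j, j ∉ S → inner ℂ (b j) z = (0 : ℂ) := by
    intro z hz j hj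
    induction hz using Submodule.span_induction with
    | mem w hw =>
        obtain ⟨⟨k, hk⟩, rfl⟩ := hw
        exact b.orthonormal.2 (fun h => hj (h ▸ hk))
    | zero => simp
    | add u w _ _ hu hw => rw [inner_add_right, hu, hw, add_zero]
    | smul c u _ hu => rw [inner_smul_right, hu, mul_zero]
  -- finrank of V
  have hVrank : Module.finrank ℂ V = Fintype.card S := by
    refine finrank_span_eq_card ?_
    exact (b.orthonormal.linearIndependent).comp Subtype.val Subtype.val_injective
  have hcard : (i : ℕ) + 1 ≤ Fintype.card S := by
    rw [← Set.toFinset_card]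
    have := Finset.card_le_card_of_injOn (f := (e : Fin n → Fin n)) (s := Finset.Iic i)
      (t := S.toFinset) (fun k hk => by
        rw [Finset.mem_coe, Set.mem_toFinset]
        have hk' : k ≤ i := Finset.mem_Iic.mp hk
        have : σB i ≤ σB k := hanti hk'
        have h2 : σB i ^ 2 ≤ σB k ^ 2 := pow_le_pow_left₀ (hpos i) this 2
        simpa [hS, ← heig k] using h2) (e.injective.injOn)
    simpa [Fin.card_Iic] using this
  -- finrank of K
  have hKrank : Module.finrank ℂ K = Module.finrank ℂ (LinearMap.ker A.mulVecLin) := by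
    rw [hK, Submodule.comap_equiv_eq_map_symm]
    exact LinearEquiv.finrank_map_eq _ _
  have hker : Module.finrank ℂ (LinearMap.ker A.mulVecLin) + A.rank = n := by
    have := LinearMap.finrank_range_add_finrank_ker A.mulVecLin
    rw [Matrix.rank]
    rw [Module.finrank_fintype_fun_eq_card] at this
    simpa [add_comm, Fintype.card_fin] using this
  -- nontrivial intersection
  have hsup : Module.finrank ℂ (V ⊔ K : Submodule ℂ (EuclideanSpace ℂ (Fin n))) ≤ n := by
    refine (Submodule.finrank_le _).trans_eq ?_
    simp [finrank_euclideanSpace]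
  have hsum := Submodule.finrank_sup_add_finrank_inf_eq V K
  have hin : 0 < Module.finrank ℂ (V ⊓ K : Submodule ℂ (EuclideanSpace ℂ (Fin n))) := by
    have hi : (i : ℕ) < n := i.isLt
    omega
  have hne : (V ⊓ K : Submodule ℂ (EuclideanSpace ℂ (Fin n))) ≠ ⊥ := by
    intro h
    rw [h, finrank_bot] at hin
    exact lt_irrefl 0 hin
  obtain ⟨x, hx, hx0⟩ := Submodule.exists_mem_ne_zero_of_ne_bot hne
  have hxV : x ∈ V := hx.1
  have hxK : x ∈ K := hx.2
  -- set up vectors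
  set v : Fin n → ℂ := (WithLp.linearEquiv 2 ℂ (Fin n → ℂ)) x with hv
  have hAv : A *ᵥ v = 0 := by
    have := (Submodule.mem_comap.mp hxK)
    simpa [Matrix.mulVecLin_apply, hv] using this
  set U : Matrix (Fin n) (Fin n) ℂ := (hH.eigenvectorUnitary : Matrix (Fin n) (Fin n) ℂ) with hU
  set y : Fin n → ℂ := Uᴴ *ᵥ v with hy
  -- y in terms of inner products
  have hyinner : ∀ j, y j = inner ℂ (b j) x := by
    intro j
    simp only [hy, hU, mulVec, dotProduct, conjTranspose_apply, PiLp.inner_apply,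
      Matrix.IsHermitian.eigenvectorUnitary_apply, RCLike.inner_apply, hv]
    exact Finset.sum_congr rfl fun _ _ => mul_comm _ _
  -- key identities
  have key1 : star v ⬝ᵥ ((Bᴴ * B) *ᵥ v) = ∑ k, (‖(B *ᵥ v) k‖ ^ 2 : ℂ) := by
    rw [← mulVec_mulVec, dotProduct_mulVec, ← star_mulVec]
    simp [dotProduct, RCLike.conj_mul]
  have key2 : star v ⬝ᵥ ((Bᴴ * B) *ᵥ v) = ∑ j, (lam j : ℂ) * (‖y j‖ ^ 2 : ℂ) := by
    conv_lhs => rw [hH.spectral_theorem, Unitary.conjStarAlgAut_apply]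
    rw [← hU, ← mulVec_mulVec, ← mulVec_mulVec, dotProduct_mulVec]
    have hsv : star v ᵥ* U = star y := by
      rw [hy, star_mulVec, conjTranspose_conjTranspose]
    rw [hsv, Matrix.star_eq_conjTranspose, ← hy]
    refine Finset.sum_congr rfl fun j _ => ?_
    rw [mulVec_diagonal, Pi.star_apply, mul_left_comm]
    norm_cast
    rw [RCLike.star_def, RCLike.conj_mul]
    norm_cast
    push_cast [Function.comp_apply, hlam]
    norm_num
  have key3 : ∑ j, (‖y j‖ ^ 2 : ℝ) = ∑ c, ‖v c‖ ^ 2 := by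
    have hUU : U * Uᴴ = 1 := by
      rw [← Matrix.star_eq_conjTranspose]
      exact Unitary.mul_star_self_of_mem (hH.eigenvectorUnitary).2
    have h1 : star y ⬝ᵥ y = star v ⬝ᵥ v := by
      rw [hy, star_mulVec, conjTranspose_conjTranspose, ← dotProduct_mulVec,
        mulVec_mulVec, hUU, one_mulVec]
    have h2 : (∑ j, (‖y j‖ ^ 2 : ℂ)) = ∑ c, (‖v c‖ ^ 2 : ℂ) := by
      calc (∑ j, (‖y j‖ ^ 2 : ℂ)) = star y ⬝ᵥ y := by
            simp [dotProduct, RCLike.conj_mul]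
        _ = star v ⬝ᵥ v := h1
        _ = ∑ c, (‖v c‖ ^ 2 : ℂ) := by simp [dotProduct, RCLike.conj_mul]
    exact_mod_cast h2
  -- Q real
  set Q : ℝ := ∑ k, ‖(B *ᵥ v) k‖ ^ 2 with hQ
  have hQeq : Q = ∑ j, lam j * ‖y j‖ ^ 2 := by
    have : (Q : ℂ) = ∑ j, (lam j : ℂ) * (‖y j‖ ^ 2 : ℂ) := by
      rw [hQ, ← key2, key1]
      push_cast
      ring
    exact_mod_cast this
  -- lower bound
  have hyzero : ∀ j, j ∉ S → y j = 0 := by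
    intro j hj
    rw [hyinner j]
    exact horth x hxV j hj
  have hlower : σB i ^ 2 * (∑ c, ‖v c‖ ^ 2) ≤ Q := by
    rw [hQeq, ← key3, Finset.mul_sum]
    refine Finset.sum_le_sum fun j _ => ?_
    by_cases hj : j ∈ S
    · exact mul_le_mul_of_nonneg_right hj (by positivity)
    · rw [hyzero j hj]
      simp
  -- upper bound
  have hupper : Q ≤ (∑ x, ∑ y, ‖(B - A) x y‖ ^ 2) * ∑ c, ‖v c‖ ^ 2 := by
    have hBv : B *ᵥ v = (B - A) *ᵥ v := by
      rw [sub_mulVec, hAv, sub_zero]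
    rw [hQ, hBv, Finset.sum_mul]
    refine Finset.sum_le_sum fun k _ => ?_
    calc ‖((B - A) *ᵥ v) k‖ ^ 2 ≤ (∑ c, ‖(B - A) k c‖ * ‖v c‖) ^ 2 := by
          simp only [mulVec, dotProduct]
          refine pow_le_pow_left₀ (norm_nonneg _) ?_ 2
          refine (norm_sum_le _ _).trans ?_
          exact Finset.sum_le_sum fun c _ => (norm_mul_le _ _)
      _ ≤ (∑ c, ‖(B - A) k c‖ ^ 2) * ∑ c, ‖v c‖ ^ 2 :=
          Finset.sum_mul_sq_le_sq_mul_sq Finset.univ _ _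
  -- positivity of ∑ ‖v c‖²
  have hvne : v ≠ 0 := by
    intro h
    apply hx0
    have : (WithLp.linearEquiv 2 ℂ (Fin n → ℂ)) x = 0 := h
    simpa using congrArg (WithLp.linearEquiv 2 ℂ (Fin n → ℂ)).symm this
  have hT : 0 < ∑ c, ‖v c‖ ^ 2 := by
    obtain ⟨c, hc⟩ := Function.ne_iff.mp hvne
    exact Finset.sum_pos' (fun _ _ => by positivity)
      ⟨c, Finset.mem_univ c, pow_pos (norm_pos_iff.mpr hc) 2⟩
  have := hlower.trans hupper
  exact le_of_mul_le_mul_right this hT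
end

section
/- (Negative second moment identity) Let A be an n×m complex matrix (n ≤ m) of rank n, with rows a₁, …, a_n ∈ ℂ^m, and let σ₁ ≥ … ≥ σ_n > 0 be its singular values. For each i, let S_i denote the linear span in ℂ^m of the rows {a_j : j ≠ i}, and let dist(a_i, S_i) be the Euclidean distance from a_i to S_i. Then Σ_{i=1}^{n} σ_i^{−2} = Σ_{i=1}^{n} dist(a_i, S_i)^{−2}. -/
open Matrix

/-- Negative second moment identity: let `A` be an `n × m` complex matrix (`n ≤ m`) of full
row rank `n`, with rows `a₁, …, a_n` (viewed in Euclidean space `ℂ^m`) and singular values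
`σ₁ ≥ … ≥ σ_n > 0` (the positive square roots of the eigenvalues of `A Aᴴ`).  If `S_i`
denotes the span of the rows other than `a_i`, then
`∑ i, σ_i⁻² = ∑ i, dist(a_i, S_i)⁻²`. -/
theorem stmt_5 (n m : ℕ) (hnm : n ≤ m)
    (A : Matrix (Fin n) (Fin m) ℂ) (hrank : A.rank = n)
    (σ : Fin n → ℝ) (hσ_anti : Antitone σ) (hσ_pos : ∀ i, 0 < σ i)
    (hσ : ∃ e : Fin n ≃ Fin n,
      ∀ i, σ i ^ 2 = (Matrix.isHermitian_mul_conjTranspose_self A).eigenvalues (e i))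
    (a : Fin n → EuclideanSpace ℂ (Fin m)) (ha : ∀ i j, a i j = A i j)
    (S : Fin n → Submodule ℂ (EuclideanSpace ℂ (Fin m)))
    (hS : ∀ i, S i = Submodule.span ℂ (a '' {j | j ≠ i})) :
    ∑ i, (σ i ^ 2)⁻¹
      = ∑ i, (Metric.infDist (a i) (S i : Set (EuclideanSpace ℂ (Fin m))) ^ 2)⁻¹ := by
  classical
  obtain ⟨e, he⟩ := hσ
  set hB := Matrix.isHermitian_mul_conjTranspose_self A with hBdef
  set lam : Fin n → ℝ := hB.eigenvalues with hlamdef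
  have hlam_pos : ∀ j, 0 < lam j := by
    intro j
    have h1 := he (e.symm j)
    rw [Equiv.apply_symm_apply] at h1
    rw [← h1]
    exact pow_pos (hσ_pos _) 2
  set U : Matrix (Fin n) (Fin n) ℂ := (hB.eigenvectorUnitary : Matrix (Fin n) (Fin n) ℂ)
    with hUdef
  have hUU : star U * U = 1 := by
    have := hB.eigenvectorUnitary.2
    rw [Matrix.mem_unitaryGroup_iff'] at this
    exact this
  have hUUs : U * star U = 1 := by
    have := hB.eigenvectorUnitary.2
    rw [Matrix.mem_unitaryGroup_iff] at this
    exact this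
  set C : Matrix (Fin n) (Fin n) ℂ :=
    U * diagonal (fun j => ((lam j : ℂ))⁻¹) * star U with hCdef
  -- C is the inverse of B = A * Aᴴ
  have hCB : C * (A * Aᴴ) = 1 := by
    conv_lhs => rw [hB.spectral_theorem]
    rw [hCdef]
    calc U * diagonal (fun j => ((lam j : ℂ))⁻¹) * star U *
          (U * diagonal (RCLike.ofReal ∘ lam) * star U)
        = U * (diagonal (fun j => ((lam j : ℂ))⁻¹) * (star U * U) *
            diagonal (RCLike.ofReal ∘ lam)) * star U := by
              simp only [Matrix.mul_assoc]
      _ = 1 := by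
          rw [hUU, mul_one, diagonal_mul_diagonal]
          have : (fun j => ((lam j : ℂ))⁻¹ * (RCLike.ofReal ∘ lam) j) = fun _ => (1 : ℂ) := by
            funext j
            have hne : (lam j : ℂ) ≠ 0 := by exact_mod_cast (hlam_pos j).ne'
            simpa using inv_mul_cancel₀ hne
          rw [this, diagonal_one, mul_one, hUUs]
  -- trace of C
  have htrace : ∑ i, C i i = ∑ j, ((lam j : ℂ))⁻¹ := by
    have : ∑ i, C i i = Matrix.trace C := rfl
    rw [this, hCdef, Matrix.trace_mul_comm, ← Matrix.mul_assoc, hUU, Matrix.one_mul,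
      Matrix.trace_diagonal]
  -- key geometric fact
  have key : ∀ i, C i i
      = ((Metric.infDist (a i) (S i : Set (EuclideanSpace ℂ (Fin m))) ^ 2)⁻¹ : ℝ) := by
    intro i
    set h : EuclideanSpace ℂ (Fin m) := ∑ j, C i j • a j with hhdef
    have hinner : ∀ j, (inner ℂ (a j) h : ℂ) = (1 : Matrix (Fin n) (Fin n) ℂ) i j := by
      intro j
      rw [← hCB, hhdef, inner_sum]
      simp only [inner_smul_right]
      rw [Matrix.mul_apply]
      refine Finset.sum_congr rfl fun j' _ => ?_
      congr 1
      rw [Matrix.mul_apply, PiLp.inner_apply]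
      simp only [RCLike.inner_apply, conjTranspose_apply, ha]
      refine Finset.sum_congr rfl fun k _ => ?_
      rw [mul_comm]
      exact mul_comm _ _
    have hinner_ii : (inner ℂ (a i) h : ℂ) = 1 := by rw [hinner i, Matrix.one_apply_eq]
    have hinner_ne : ∀ j, j ≠ i → (inner ℂ (a j) h : ℂ) = 0 := by
      intro j hj
      rw [hinner j, Matrix.one_apply_ne (Ne.symm hj)]
    have hh_ne : h ≠ 0 := by
      intro h0
      rw [h0, inner_zero_right] at hinner_ii
      exact one_ne_zero hinner_ii.symm
    have hnorm_pos : (0:ℝ) < ‖h‖ := norm_pos_iff.2 hh_ne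
    have hhh : (inner ℂ h h : ℂ) = (starRingEnd ℂ) (C i i) := by
      rw [hhdef, sum_inner]
      simp only [inner_smul_left]
      rw [← hhdef]
      rw [Finset.sum_eq_single i]
      · rw [hinner_ii, mul_one]
      · intro j _ hj
        rw [hinner_ne j hj, mul_zero]
      · intro hi; exact absurd (Finset.mem_univ i) hi
    have hCii : C i i = ((‖h‖ ^ 2 : ℝ) : ℂ) := by
      have h1 : (inner ℂ h h : ℂ) = ((‖h‖ ^ 2 : ℝ) : ℂ) := by
        rw [inner_self_eq_norm_sq_to_K]; norm_cast
      have h2 : (starRingEnd ℂ) (C i i) = ((‖h‖ ^ 2 : ℝ) : ℂ) := hhh.symm.trans h1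
      calc C i i = (starRingEnd ℂ) ((starRingEnd ℂ) (C i i)) := by rw [Complex.conj_conj]
        _ = (starRingEnd ℂ) ((‖h‖ ^ 2 : ℝ) : ℂ) := by rw [h2]
        _ = ((‖h‖ ^ 2 : ℝ) : ℂ) := Complex.conj_ofReal _
    set c : ℂ := ((‖h‖ ^ 2 : ℝ) : ℂ) with hcdef
    have hc_ne : c ≠ 0 := by
      rw [hcdef]
      exact_mod_cast (pow_pos hnorm_pos 2).ne'
    set u : EuclideanSpace ℂ (Fin m) := c⁻¹ • h with hudef
    have hsplit : u = a i + ∑ j ∈ Finset.univ.erase i, (c⁻¹ * C i j) • a j := by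
      rw [hudef, hhdef, Finset.smul_sum]
      simp only [smul_smul]
      rw [← Finset.add_sum_erase _ _ (Finset.mem_univ i)]
      congr 1
      rw [hCii, inv_mul_cancel₀ hc_ne, one_smul]
    have hpmem : a i - u ∈ S i := by
      rw [hsplit, show a i - (a i + ∑ j ∈ Finset.univ.erase i, (c⁻¹ * C i j) • a j)
        = -∑ j ∈ Finset.univ.erase i, (c⁻¹ * C i j) • a j by abel]
      refine neg_mem (Submodule.sum_mem _ fun j hj => Submodule.smul_mem _ _ ?_)
      rw [hS]
      exact Submodule.subset_span ⟨j, Finset.ne_of_mem_erase hj, rfl⟩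
    have hperp : ∀ w ∈ S i, (inner ℂ w u : ℂ) = 0 := by
      intro w hw
      rw [hS] at hw
      induction hw using Submodule.span_induction with
      | mem x hx =>
          obtain ⟨j, hj, rfl⟩ := hx
          rw [hudef, inner_smul_right, hinner_ne j hj, mul_zero]
      | zero => simp
      | add x y _ _ hx hy => rw [inner_add_left, hx, hy, add_zero]
      | smul t x _ hx => rw [inner_smul_left, hx, mul_zero]
    have hnu : ‖u‖ = ‖h‖⁻¹ := by
      rw [hudef, norm_smul, norm_inv, hcdef, Complex.norm_real,
        Real.norm_of_nonneg (pow_nonneg (norm_nonneg h) 2), sq]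
      field_simp
    have hu_pos : (0:ℝ) < ‖u‖ := by rw [hnu]; exact inv_pos.2 hnorm_pos
    have hdist : Metric.infDist (a i) (S i : Set (EuclideanSpace ℂ (Fin m))) = ‖u‖ := by
      apply le_antisymm
      · have h1 : a i - u ∈ (S i : Set (EuclideanSpace ℂ (Fin m))) := hpmem
        have h2 := Metric.infDist_le_dist_of_mem (x := a i) h1
        rwa [dist_eq_norm, show a i - (a i - u) = u by abel] at h2
      · rw [Metric.infDist_eq_iInf]
        have hne : Nonempty ((S i : Set (EuclideanSpace ℂ (Fin m)))) :=
          ⟨⟨0, Submodule.zero_mem _⟩⟩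
        refine le_ciInf fun yy => ?_
        obtain ⟨y, hy⟩ := yy
        have horth : (inner ℂ u (a i - y) : ℂ) = inner ℂ u u := by
          have hw : (a i - u) - y ∈ S i := Submodule.sub_mem _ hpmem hy
          have h0 : (inner ℂ u ((a i - u) - y) : ℂ) = 0 := by
            rw [← inner_conj_symm, hperp _ hw, map_zero]
          calc (inner ℂ u (a i - y) : ℂ) = inner ℂ u (u + ((a i - u) - y)) := by
                congr 1; abel
            _ = inner ℂ u u + inner ℂ u ((a i - u) - y) := inner_add_right _ _ _
            _ = inner ℂ u u := by rw [h0, add_zero]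
        have hcs := re_inner_le_norm (𝕜 := ℂ) u (a i - y)
        rw [horth] at hcs
        rw [@inner_self_eq_norm_mul_norm ℂ] at hcs
        rw [dist_eq_norm]
        exact le_of_mul_le_mul_left hcs hu_pos
    rw [hdist, hnu, hCii, hcdef]
    rw [show ((‖h‖⁻¹ : ℝ) ^ 2)⁻¹ = ‖h‖ ^ 2 by rw [inv_pow, inv_inv]]
  -- final assembly
  apply Complex.ofReal_injective
  rw [Complex.ofReal_sum, Complex.ofReal_sum]
  calc ∑ i, (((σ i ^ 2)⁻¹ : ℝ) : ℂ) = ∑ i, (((lam (e i))⁻¹ : ℝ) : ℂ) := by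
        refine Finset.sum_congr rfl fun i _ => ?_
        rw [he i]
      _ = ∑ j, (((lam j)⁻¹ : ℝ) : ℂ) := Equiv.sum_comp e (fun j => (((lam j)⁻¹ : ℝ) : ℂ))
      _ = ∑ j, ((lam j : ℂ))⁻¹ := by push_cast; rfl
      _ = ∑ i, C i i := htrace.symm
      _ = _ := by
        refine Finset.sum_congr rfl fun i _ => ?_
        rw [key i]
end

section
/- Let A be an n×m complex matrix (n ≤ m) of rank n, with rows a₁, …, a_n ∈ ℂ^m, and for each i let S_i denote the linear span of the rows {a_j : j ≠ i}. If there is δ > 0 such that dist(a_i, S_i) ≥ δ for every i, then the smallest singular value σ_n of A satisfies σ_n² ≥ δ²/n. -/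
open Matrix
set_option maxHeartbeats 1000000

/-- Let `A` be an `n × m` complex matrix (`n ≤ m`, `n ≥ 1`) of full row rank `n`, with rows
`a₁, …, a_n` (viewed in Euclidean space `ℂ^m`) and singular values `σ₁ ≥ … ≥ σ_n > 0`
(the positive square roots of the eigenvalues of `A Aᴴ`).  If `S_i` denotes the span of the
rows other than `a_i`, and `dist(a_i, S_i) ≥ δ > 0` for every `i`, then the smallest
singular value satisfies `σ_n² ≥ δ²/n`. -/
theorem stmt_6 (n m : ℕ) (hn : 0 < n) (hnm : n ≤ m)
    (A : Matrix (Fin n) (Fin m) ℂ) (hrank : A.rank = n)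
    (σ : Fin n → ℝ) (hσ_anti : Antitone σ) (hσ_pos : ∀ i, 0 < σ i)
    (hσ : ∃ e : Fin n ≃ Fin n,
      ∀ i, σ i ^ 2 = (Matrix.isHermitian_mul_conjTranspose_self A).eigenvalues (e i))
    (a : Fin n → EuclideanSpace ℂ (Fin m)) (ha : ∀ i j, a i j = A i j)
    (S : Fin n → Submodule ℂ (EuclideanSpace ℂ (Fin m)))
    (hS : ∀ i, S i = Submodule.span ℂ (a '' {j | j ≠ i}))
    (δ : ℝ) (hδ : 0 < δ)
    (hdist : ∀ i, δ ≤ Metric.infDist (a i) (S i : Set (EuclideanSpace ℂ (Fin m)))) :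
    δ ^ 2 / n ≤ σ ⟨n - 1, by omega⟩ ^ 2 := by
  obtain ⟨e, he⟩ := hσ
  have hA := isHermitian_mul_conjTranspose_self A
  haveI : Nonempty (Fin n) := ⟨⟨0, hn⟩⟩
  have hnn : (0:ℝ) < (n:ℝ) := by exact_mod_cast hn
  -- Main quantitative estimate for a general unit vector
  have main : ∀ v : Fin n → ℂ, (∑ i, ‖v i‖ ^ 2 = 1) →
      δ ^ 2 / n ≤ ∑ j, ‖(Aᴴ *ᵥ v) j‖ ^ 2 := by
    intro v hvnorm
    set y : Fin n → ℂ := fun i => (starRingEnd ℂ) (v i) with hy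
    set u : EuclideanSpace ℂ (Fin m) := ∑ i, y i • a i with hu
    have huj : ∀ j, u j = (starRingEnd ℂ) ((Aᴴ *ᵥ v) j) := by
      intro j
      have h0 : u j = ∑ i, y i * a i j := by
        rw [hu]
        have := Finset.sum_apply (ι := Fin n) j Finset.univ
          (fun i => ((y i • a i : EuclideanSpace ℂ (Fin m)) : Fin m → ℂ))
        simp only [WithLp.ofLp_sum, PiLp.smul_apply, smul_eq_mul] at this ⊢
        exact this
      have h1 : (Aᴴ *ᵥ v) j = ∑ i, star (A i j) * v i := by
        simp [mulVec, dotProduct, conjTranspose_apply]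
      rw [h0, h1, map_sum]
      refine Finset.sum_congr rfl fun i _ => ?_
      rw [ha i j, hy]
      simp [Complex.star_def, mul_comm]
    have hsum_eq : ∑ j, ‖(Aᴴ *ᵥ v) j‖ ^ 2 = ‖u‖ ^ 2 := by
      rw [EuclideanSpace.norm_eq, Real.sq_sqrt (by positivity)]
      refine Finset.sum_congr rfl fun j _ => ?_
      rw [huj j]
      simp
    rw [hsum_eq]
    -- pick index with maximal |v i|
    obtain ⟨i₀, hi₀⟩ := Finite.exists_max fun i => ‖v i‖
    have hmax : 1 ≤ (n : ℝ) * ‖v i₀‖ ^ 2 := by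
      calc (1 : ℝ) = ∑ i, ‖v i‖ ^ 2 := hvnorm.symm
        _ ≤ ∑ _i : Fin n, ‖v i₀‖ ^ 2 :=
          Finset.sum_le_sum fun i _ => pow_le_pow_left₀ (norm_nonneg _) (hi₀ i) 2
        _ = (n : ℝ) * ‖v i₀‖ ^ 2 := by simp [Finset.sum_const, mul_comm]
    have hvpos : 0 < ‖v i₀‖ := by
      by_contra h
      push_neg at h
      have : ‖v i₀‖ = 0 := le_antisymm h (norm_nonneg _)
      rw [this] at hmax; simp at hmax; linarith
    have hy0 : y i₀ ≠ 0 := by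
      simp only [hy, ne_eq, map_eq_zero]
      exact fun h => by rw [h] at hvpos; simp at hvpos
    have hyn : ‖y i₀‖ = ‖v i₀‖ := by rw [hy]; exact RCLike.norm_conj _
    set s : EuclideanSpace ℂ (Fin m) := ∑ i ∈ Finset.univ.erase i₀, y i • a i with hs
    have hsmem : s ∈ S i₀ := by
      rw [hS i₀]
      refine Submodule.sum_mem _ fun i hi => Submodule.smul_mem _ _ ?_
      exact Submodule.subset_span ⟨i, (Finset.mem_erase.mp hi).1, rfl⟩
    have husplit : u = y i₀ • a i₀ + s := by
      rw [hu, hs]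
      exact (Finset.add_sum_erase _ _ (Finset.mem_univ i₀)).symm
    have hub : ‖v i₀‖ * δ ≤ ‖u‖ := by
      have hp : -((y i₀)⁻¹ • s) ∈ S i₀ :=
        Submodule.neg_mem _ (Submodule.smul_mem _ _ hsmem)
      have h2 : δ ≤ ‖a i₀ + (y i₀)⁻¹ • s‖ := by
        calc δ ≤ Metric.infDist (a i₀) (S i₀ : Set (EuclideanSpace ℂ (Fin m))) := hdist i₀
          _ ≤ dist (a i₀) (-((y i₀)⁻¹ • s)) := Metric.infDist_le_dist_of_mem hp
          _ = ‖a i₀ + (y i₀)⁻¹ • s‖ := by rw [dist_eq_norm, sub_neg_eq_add]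
      have h3 : u = y i₀ • (a i₀ + (y i₀)⁻¹ • s) := by
        rw [husplit, smul_add, smul_inv_smul₀ hy0]
      calc ‖v i₀‖ * δ ≤ ‖v i₀‖ * ‖a i₀ + (y i₀)⁻¹ • s‖ :=
            mul_le_mul_of_nonneg_left h2 (norm_nonneg _)
        _ = ‖u‖ := by rw [h3, norm_smul, hyn]
    calc δ ^ 2 / n = (1 / n) * δ ^ 2 := by ring
      _ ≤ ‖v i₀‖ ^ 2 * δ ^ 2 := by
          apply mul_le_mul_of_nonneg_right _ (by positivity)
          rw [div_le_iff₀ hnn] at *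
          nlinarith
      _ = (‖v i₀‖ * δ) ^ 2 := by ring
      _ ≤ ‖u‖ ^ 2 := pow_le_pow_left₀ (by positivity) hub 2
  -- every eigenvalue of A Aᴴ is at least δ²/n
  have key : ∀ k : Fin n, δ ^ 2 / n ≤ hA.eigenvalues k := by
    intro k
    set v : Fin n → ℂ := (WithLp.equiv 2 (Fin n → ℂ)) (hA.eigenvectorBasis k) with hv
    have hnorm : ‖hA.eigenvectorBasis k‖ = 1 := hA.eigenvectorBasis.orthonormal.1 k
    have hvnorm : ∑ i, ‖v i‖ ^ 2 = 1 := by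
      rw [EuclideanSpace.norm_eq] at hnorm
      rw [← Real.sq_sqrt (show (0:ℝ) ≤ ∑ i, ‖v i‖ ^ 2 by positivity)]
      rw [show (∑ i, ‖v i‖ ^ 2) = ∑ i, ‖hA.eigenvectorBasis k i‖ ^ 2 from rfl, hnorm, one_pow]
    have heig : hA.eigenvalues k = RCLike.re (star (Aᴴ *ᵥ v) ⬝ᵥ (Aᴴ *ᵥ v)) := by
      rw [hA.eigenvalues_eq k, ← mulVec_mulVec, dotProduct_mulVec, star_mulVec,
        conjTranspose_conjTranspose]
      rfl
    have hre : RCLike.re (star (Aᴴ *ᵥ v) ⬝ᵥ (Aᴴ *ᵥ v)) = ∑ j, ‖(Aᴴ *ᵥ v) j‖ ^ 2 := by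
      rw [dotProduct, RCLike.re_to_complex, Complex.re_sum]
      refine Finset.sum_congr rfl fun j _ => ?_
      simp only [Pi.star_apply, Complex.star_def, mul_comm, Complex.mul_conj,
        Complex.ofReal_re, Complex.sq_norm]
    rw [heig, hre]
    exact main v hvnorm
  calc δ ^ 2 / n ≤ hA.eigenvalues (e ⟨n - 1, by omega⟩) := key _
    _ = σ ⟨n - 1, by omega⟩ ^ 2 := (he _).symm
end

section
/- Fix an integer K ≥ 2 and real numbers N > 0 and N_fd ≥ 0 with N ≥ N_fd + K − 1. Define the net degrees of freedom of zero-forcing with quantization-scaling parameter α > 0 as f(α) = K·( min(α, 1)·(1 − N_fd/N) − α(K−1)/N ). Then for every α > 0, f(α) ≤ K·(1 − (N_fd + K − 1)/N), with equality at α = 1; i.e., the maximum net DoF of zero-forcing is K(1 − (N_fd + K − 1)/N), attained at α = 1. -/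
/-- Maximum net DoF of zero-forcing: for K users, coherence time `N`, feedback delay `Nfd`
with `N ≥ Nfd + K - 1`, the net DoF `f(α) = K (min(α,1)(1 - Nfd/N) - α(K-1)/N)` satisfies
`f(α) ≤ K (1 - (Nfd + K - 1)/N)` for all `α > 0`, with equality at `α = 1`. -/
theorem stmt_7 (K : ℕ) (hK : 2 ≤ K) (N Nfd : ℝ) (hN : 0 < N) (hNfd : 0 ≤ Nfd)
    (hNK : Nfd + (K : ℝ) - 1 ≤ N) :
    (∀ α : ℝ, 0 < α →
      (K : ℝ) * (min α 1 * (1 - Nfd / N) - α * ((K : ℝ) - 1) / N)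
        ≤ (K : ℝ) * (1 - (Nfd + (K : ℝ) - 1) / N)) ∧
    (K : ℝ) * (min (1 : ℝ) 1 * (1 - Nfd / N) - 1 * ((K : ℝ) - 1) / N)
      = (K : ℝ) * (1 - (Nfd + (K : ℝ) - 1) / N) := by
  have hK2 : (2 : ℝ) ≤ (K : ℝ) := by exact_mod_cast hK
  have hK0 : (0 : ℝ) ≤ (K : ℝ) := by linarith
  have hNne : N ≠ 0 := hN.ne'
  constructor
  · intro α hα
    apply mul_le_mul_of_nonneg_left _ hK0
    rw [← sub_nonneg]
    rcases le_total α 1 with h | h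
    · rw [min_eq_left h]
      have key : 1 - (Nfd + (K : ℝ) - 1) / N - (α * (1 - Nfd / N) - α * ((K : ℝ) - 1) / N)
          = (1 - α) * (N - (Nfd + (K : ℝ) - 1)) / N := by field_simp; ring
      rw [key]
      apply div_nonneg _ hN.le
      exact mul_nonneg (by linarith) (by linarith)
    · rw [min_eq_right h]
      have key : 1 - (Nfd + (K : ℝ) - 1) / N - (1 * (1 - Nfd / N) - α * ((K : ℝ) - 1) / N)
          = (α - 1) * ((K : ℝ) - 1) / N := by field_simp; ring
      rw [key]
      apply div_nonneg _ hN.le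
      exact mul_nonneg (by linarith) (by linarith)
  · rw [min_self]
    congr 1
    field_simp
    ring
end

section
/- Fix an integer K ≥ 2 and a real number N with N ≥ K·(H_K − 1), where H_K = 1 + 1/2 + … + 1/K. Define, for α > 0, F(α) = min( (N + α(K−1)(N − K(H_K − 1))) / (H_K · N) , K·(N − α(K−1)(H_K − 1)) / (H_K · N) ). Then for every α > 0, F(α) ≤ K·(N − (K−1)(H_K − 1)) / (H_K · N), with equality at α = 1; i.e., the maximum net DoF of the K-user MAT scheme is K(N − (K−1)(H_K − 1))/(H_K N), attained at α = 1. -/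
/-- The K-th harmonic number `H_K = 1 + 1/2 + … + 1/K`. -/
noncomputable def harmonicNumber (K : ℕ) : ℝ := ∑ i ∈ Finset.range K, (1 : ℝ) / (i + 1)

lemma one_lt_harmonicNumber {K : ℕ} (hK : 2 ≤ K) : 1 < harmonicNumber K := by
  have h2 : harmonicNumber 2 = 3 / 2 := by
    simp [harmonicNumber, Finset.sum_range_succ]
    norm_num
  have hle : harmonicNumber 2 ≤ harmonicNumber K := by
    apply Finset.sum_le_sum_of_subset_of_nonneg
    · exact Finset.range_subset_range.mpr hK
    · intro i _ _
      positivity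
  linarith

/-- Maximum net DoF of the K-user MAT scheme: with `K ≥ 2`, `N ≥ K (H_K - 1)`,
`F(α) = min((N + α(K-1)(N - K(H_K-1)))/(H_K N), K(N - α(K-1)(H_K-1))/(H_K N))`
satisfies `F(α) ≤ K(N - (K-1)(H_K-1))/(H_K N)` for all `α > 0`, with equality at `α = 1`. -/
theorem stmt_10 (K : ℕ) (hK : 2 ≤ K) (N : ℝ)
    (hN : (K : ℝ) * (harmonicNumber K - 1) ≤ N) :
    (∀ α : ℝ, 0 < α →
      min ((N + α * ((K : ℝ) - 1) * (N - (K : ℝ) * (harmonicNumber K - 1)))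
            / (harmonicNumber K * N))
          ((K : ℝ) * (N - α * ((K : ℝ) - 1) * (harmonicNumber K - 1))
            / (harmonicNumber K * N))
        ≤ (K : ℝ) * (N - ((K : ℝ) - 1) * (harmonicNumber K - 1)) / (harmonicNumber K * N)) ∧
    min ((N + 1 * ((K : ℝ) - 1) * (N - (K : ℝ) * (harmonicNumber K - 1)))
          / (harmonicNumber K * N))
        ((K : ℝ) * (N - 1 * ((K : ℝ) - 1) * (harmonicNumber K - 1))
          / (harmonicNumber K * N))
      = (K : ℝ) * (N - ((K : ℝ) - 1) * (harmonicNumber K - 1)) / (harmonicNumber K * N) := by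
  set H := harmonicNumber K with hHdef
  have hH : 1 < H := one_lt_harmonicNumber hK
  have hK2 : (2 : ℝ) ≤ (K : ℝ) := by exact_mod_cast hK
  have hNpos : 0 < N := lt_of_lt_of_le (by nlinarith) hN
  have hD : 0 < H * N := by nlinarith
  constructor
  · intro α hα
    rcases le_total α 1 with h1 | h1
    · refine le_trans (min_le_left _ _) ((div_le_div_iff_of_pos_right hD).mpr ?_)
      nlinarith [mul_nonneg (sub_nonneg.mpr hN) (sub_nonneg.mpr h1)]
    · refine le_trans (min_le_right _ _) ((div_le_div_iff_of_pos_right hD).mpr ?_)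
      nlinarith [mul_nonneg (mul_nonneg (mul_nonneg (sub_nonneg.mpr h1) (by linarith : (0:ℝ) ≤ (K:ℝ) - 1)) (by linarith : (0:ℝ) ≤ H - 1)) (by linarith : (0:ℝ) ≤ (K:ℝ))]
  · have e1 : N + 1 * ((K : ℝ) - 1) * (N - (K : ℝ) * (H - 1))
        = (K : ℝ) * (N - ((K : ℝ) - 1) * (H - 1)) := by ring
    have e2 : (K : ℝ) * (N - 1 * ((K : ℝ) - 1) * (H - 1))
        = (K : ℝ) * (N - ((K : ℝ) - 1) * (H - 1)) := by ring
    rw [e1, e2, min_self]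
end

section
/- Fix an integer K ≥ 2 and a real number N > 0, and let H_K = 1 + 1/2 + … + 1/K. Then H_K < K, and the inequality K·(N − (K−1)(H_K − 1)) / (H_K · N) ≤ 1 holds if and only if N ≤ K(K−1)(H_K − 1) / (K − H_K). That is, the maximum net DoF of the K-user MAT scheme is at most the net DoF 1 of single-user transmission exactly when the coherence time satisfies N ≤ K(K−1)(H_K − 1)/(K − H_K). -/
lemma harmonic_lt (K : ℕ) (hK : 2 ≤ K) : harmonicNumber K < (K : ℝ) := by
  have h : harmonicNumber K < ∑ _i ∈ Finset.range K, (1 : ℝ) := by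
    apply Finset.sum_lt_sum
    · intro i _
      rw [div_le_one (by positivity)]
      have : (0:ℝ) ≤ (i:ℝ) := Nat.cast_nonneg i
      linarith
    · refine ⟨1, Finset.mem_range.2 (by omega), by norm_num⟩
  simpa using h

lemma harmonic_ge_one (K : ℕ) (hK : 2 ≤ K) : 1 ≤ harmonicNumber K := by
  have h : ∑ i ∈ Finset.range 1, (1 : ℝ) / (i + 1) ≤ harmonicNumber K := by
    apply Finset.sum_le_sum_of_subset_of_nonneg
    · exact Finset.range_subset_range.2 (by omega)
    · intro i _ _; positivity
  simpa using h

/-- For `K ≥ 2` and `N > 0`, one has `H_K < K`, and the maximum net DoF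
`K(N - (K-1)(H_K-1))/(H_K N)` of the K-user MAT scheme is at most 1 iff
`N ≤ K(K-1)(H_K-1)/(K - H_K)`. -/
theorem stmt_15 (K : ℕ) (hK : 2 ≤ K) (N : ℝ) (hN : 0 < N) :
    harmonicNumber K < (K : ℝ) ∧
    ((K : ℝ) * (N - ((K : ℝ) - 1) * (harmonicNumber K - 1)) / (harmonicNumber K * N) ≤ 1 ↔
      N ≤ (K : ℝ) * ((K : ℝ) - 1) * (harmonicNumber K - 1) / ((K : ℝ) - harmonicNumber K)) := by
  have hlt := harmonic_lt K hK
  have h1 := harmonic_ge_one K hK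
  have hH : 0 < harmonicNumber K := by linarith
  refine ⟨hlt, ?_⟩
  rw [div_le_one (by positivity), le_div_iff₀ (by linarith)]
  constructor <;> intro h <;> nlinarith [h]
end
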